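/- Let U : ℕ → ℝ be defined by U(n) = P(n) for n ≤ n₀ and U(n) = Σ_{i=1}^{n₀} Q(i)·U(n-i) + Σ_{i=n₀+1}^{n} R·U(i)·U(n-i) for n > n₀, where R = Q(n₀)/P(n₀) < 1. Then the formal power series f(x) = Σ_{n≥0} U(n)x^n satisfies the quadratic equation R·f(x)² + (g(x) - 2)·f(x) + 1 = 0, where g(x) = Σ_{i=0}^{n₀} (Q(i) - R·P(i))·x^i. -/

import Mathlib

theorem stmt10 (n₀ : ℕ) (hn₀ : 1 ≤ n₀) (P Q U : ℕ → ℝ)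
    (hP0 : P 0 = 1) (hQ0 : Q 0 = 1)
    (hrec : ∀ n : ℕ, 1 ≤ n → n ≤ n₀ → P n = ∑ i ∈ Finset.Icc 1 n, Q i * P (n - i))
    (R : ℝ) (hR : R = Q n₀ / P n₀) (hR1 : R < 1)
    (hU1 : ∀ n, n ≤ n₀ → U n = P n)
    (hU2 : ∀ n, n₀ < n → U n = ∑ i ∈ Finset.Icc 1 n₀, Q i * U (n - i) +
      ∑ i ∈ Finset.Icc (n₀ + 1) n, R * U i * U (n - i))
    (f g : PowerSeries ℝ)
    (hf : f = PowerSeries.mk U)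
    (hg : g = ∑ i ∈ Finset.range (n₀ + 1),
      PowerSeries.C (R := ℝ) (Q i - R * P i) * PowerSeries.X ^ i) :
    PowerSeries.C (R := ℝ) R * f ^ 2 + (g - 2) * f + 1 = 0 := by
  have hU0 : U 0 = 1 := by rw [hU1 0 (Nat.zero_le _), hP0]
  have keysum : ∀ n : ℕ, 1 ≤ n →
      ∑ i ∈ Finset.Icc 1 n, (if i ≤ n₀ then Q i else R * U i) * U (n - i) = U n := by
    intro n hn
    rcases le_or_gt n n₀ with h | h
    · rw [hU1 n h, hrec n hn h]
      refine Finset.sum_congr rfl ?_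
      intro i hi
      simp only [Finset.mem_Icc] at hi
      rw [if_pos (hi.2.trans h), hU1 (n - i) (le_trans (Nat.sub_le _ _) h)]
    · rw [hU2 n h]
      have e1 : Finset.Icc 1 n = Finset.Ioc 0 n := Finset.Icc_add_one_left_eq_Ioc 0 n
      have e2 : Finset.Icc 1 n₀ = Finset.Ioc 0 n₀ := Finset.Icc_add_one_left_eq_Ioc 0 n₀
      have e3 : Finset.Icc (n₀ + 1) n = Finset.Ioc n₀ n := Finset.Icc_add_one_left_eq_Ioc n₀ n
      rw [e1, e2, e3, ← Finset.sum_Ioc_consecutive _ (Nat.zero_le n₀) h.le]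
      congr 1
      · refine Finset.sum_congr rfl ?_
        intro i hi
        simp only [Finset.mem_Ioc] at hi
        rw [if_pos hi.2]
      · refine Finset.sum_congr rfl ?_
        intro i hi
        simp only [Finset.mem_Ioc] at hi
        rw [if_neg (by omega), mul_assoc]
  have hgc : ∀ j : ℕ, (PowerSeries.coeff j) g = if j ≤ n₀ then Q j - R * P j else 0 := by
    intro j
    rw [hg, map_sum]
    simp only [PowerSeries.coeff_C_mul, PowerSeries.coeff_X_pow, mul_ite, mul_one, mul_zero]
    simp [Finset.sum_ite_eq, Nat.lt_succ_iff]
  have h2 : ∀ j : ℕ, (PowerSeries.coeff j) (2 : PowerSeries ℝ) = if j = 0 then 2 else 0 := by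
    intro j
    rw [show (2 : PowerSeries ℝ) = PowerSeries.C (R := ℝ) 2 from (map_ofNat (PowerSeries.C (R := ℝ)) 2).symm, PowerSeries.coeff_C]
  apply PowerSeries.ext
  intro n
  simp only [map_add, map_zero]
  rw [PowerSeries.coeff_C_mul]
  simp only [sq, PowerSeries.coeff_mul, PowerSeries.coeff_one, hf, PowerSeries.coeff_mk,
    map_sub, hgc, h2]
  rw [Finset.Nat.sum_antidiagonal_eq_sum_range_succ_mk,
    Finset.Nat.sum_antidiagonal_eq_sum_range_succ_mk]
  rcases Nat.eq_zero_or_pos n with rfl | hn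
  · norm_num [Finset.sum_range_one, hU0, hQ0, hP0]
    ring
  · rw [if_neg hn.ne', add_zero, Finset.mul_sum, ← Finset.sum_add_distrib,
      Finset.sum_range_succ']
    have hstep : ∀ i ∈ Finset.range n,
        R * (U (i + 1) * U (n - (i + 1))) +
          ((if i + 1 ≤ n₀ then Q (i + 1) - R * P (i + 1) else 0) -
            (if i + 1 = 0 then (2:ℝ) else 0)) * U (n - (i + 1)) =
        (if i + 1 ≤ n₀ then Q (i + 1) else R * U (i + 1)) * U (n - (i + 1)) := by
      intro i _
      rw [if_neg (Nat.succ_ne_zero i), sub_zero]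
      by_cases hi : i + 1 ≤ n₀
      · rw [if_pos hi, if_pos hi, hU1 (i + 1) hi]
        ring
      · rw [if_neg hi, if_neg hi]
        ring
    rw [Finset.sum_congr rfl hstep]
    have hreidx : ∑ i ∈ Finset.range n,
        (if i + 1 ≤ n₀ then Q (i + 1) else R * U (i + 1)) * U (n - (i + 1)) =
        ∑ i ∈ Finset.Icc 1 n, (if i ≤ n₀ then Q i else R * U i) * U (n - i) := by
      rw [← Finset.Ico_add_one_right_eq_Icc, Finset.sum_Ico_eq_sum_range]
      simp [add_comm]
    rw [hreidx, keysum n hn]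
    have h0le : (0:ℕ) ≤ n₀ := Nat.zero_le _
    rw [if_pos h0le, if_pos rfl]
    simp only [Nat.sub_zero, hU0, hQ0, hP0]
    ring
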